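/- Any extension of a free continuous ℤ^d-action on the Cantor set has dynamical asymptotic dimension at most 3^d − 1. -/

import Mathlib

/-- The reachable set of `x` by `F`-paths staying in `U` (additive group version). -/
def reachSet {Γ X : Type*} [AddGroup Γ] (act : X → Γ → X) (F : Finset Γ) (U : Set X)
    (x : X) : Set X :=
  {y | ∃ l : List Γ, l ≠ [] ∧ (∀ γ ∈ l, γ ∈ F) ∧ y = act x l.sum ∧
    ∀ k, 1 ≤ k → k ≤ l.length → act x (l.take k).sum ∈ U}

/-- The dynamical asymptotic dimension of `act` is at most `m`. -/
def DADle {Γ X : Type*} [AddGroup Γ] [TopologicalSpace X] (act : X → Γ → X) (m : ℕ) : Prop :=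
  ∀ F : Finset Γ, ∃ U : Fin (m + 1) → Set X, (∀ i, IsOpen (U i)) ∧ (⋃ i, U i) = Set.univ ∧
    ∃ M : ℕ, ∀ i, ∀ x ∈ U i,
      (reachSet act F (U i) x).Finite ∧ (reachSet act F (U i) x).ncard ≤ M

/-- The dynamical asymptotic dimension of an action, as an extended natural number. -/
noncomputable def DAD {Γ X : Type*} [AddGroup Γ] [TopologicalSpace X] (act : X → Γ → X) : ℕ∞ :=
  sInf {m : ℕ∞ | ∃ k : ℕ, m = (k : ℕ∞) ∧ DADle act k}

namespace Stmt15

open scoped Classical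

set_option linter.unusedSectionVars false

/-! ### The sup-norm ball in `ℤ^d` as a finset -/

/-- The closed sup-norm ball of radius `L` in `Fin d → ℤ`. -/
noncomputable def ballF (d L : ℕ) : Finset (Fin d → ℤ) :=
  Fintype.piFinset fun _ => Finset.Icc (-(L : ℤ)) (L : ℤ)

lemma mem_ballF {d L : ℕ} {n : Fin d → ℤ} :
    n ∈ ballF d L ↔ ∀ i, -(L : ℤ) ≤ n i ∧ n i ≤ (L : ℤ) := by
  simp [ballF, Fintype.mem_piFinset]

lemma zero_mem_ballF (d L : ℕ) : (0 : Fin d → ℤ) ∈ ballF d L := by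
  rw [mem_ballF]; intro i
  simp only [Pi.zero_apply]
  constructor <;> omega

lemma neg_mem_ballF {d L : ℕ} {n : Fin d → ℤ} (h : n ∈ ballF d L) : -n ∈ ballF d L := by
  rw [mem_ballF] at h ⊢
  intro i
  have := h i
  simp only [Pi.neg_apply]
  omega

/-! ### Quantized colouring of the ball -/

/-- Coordinatewise quantization into thirds. -/
def qcol {d : ℕ} (L B : ℕ) (a : Fin d → ℤ) (j : Fin d) : ℕ :=
  min ((a j + (L : ℤ)).toNat / B) 2

lemma div_close {B x x' : ℕ} (hB : 0 < B) (h : x / B = x' / B) : x < x' + B := by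
  have h1 := Nat.div_add_mod x B
  have h2 := Nat.div_add_mod x' B
  have h3 := Nat.mod_lt x hB
  rw [h] at h1
  omega

lemma qcol_lt {d : ℕ} (L B : ℕ) (a : Fin d → ℤ) (j : Fin d) : qcol L B a j < 3 :=
  Nat.lt_succ_of_le (min_le_right _ _)

/-- Two points of the ball with the same quantization are coordinatewise close. -/
lemma qcol_close {d : ℕ} {R L B : ℕ} (hL : L = 3 * R + 1) (hB : B = 2 * R + 1)
    {a b : Fin d → ℤ} (haB : ∀ j, -(L : ℤ) ≤ a j ∧ a j ≤ L)
    (hbB : ∀ j, -(L : ℤ) ≤ b j ∧ b j ≤ L)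
    (hab : ∀ j, qcol L B a j = qcol L B b j) (j : Fin d) :
    (a j - b j).natAbs ≤ 2 * R := by
  have hai := haB j
  have hbi := hbB j
  have hqj := hab j
  unfold qcol at hqj
  have hxval : (((a j + (L : ℤ)).toNat : ℤ)) = a j + L := Int.toNat_of_nonneg (by omega)
  have hx'val : (((b j + (L : ℤ)).toNat : ℤ)) = b j + L := Int.toNat_of_nonneg (by omega)
  set x : ℕ := (a j + (L : ℤ)).toNat
  set x' : ℕ := (b j + (L : ℤ)).toNat
  have hx2L : x ≤ 2 * L := by omega
  have hx'2L : x' ≤ 2 * L := by omega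
  have hxB : x / B < 3 := by
    rw [Nat.div_lt_iff_lt_mul (by omega)]
    omega
  have hx'B : x' / B < 3 := by
    rw [Nat.div_lt_iff_lt_mul (by omega)]
    omega
  have hdiv : x / B = x' / B := by omega
  have d1 := div_close (B := B) (by omega) hdiv
  have d2 := div_close (B := B) (by omega) hdiv.symm
  omega

/-- A canonical pick from a finset of lattice points. -/
noncomputable def pick {d : ℕ} (s : Finset (Fin d → ℤ)) : Fin d → ℤ :=
  if h : s.Nonempty then h.choose else 0

lemma pick_mem {d : ℕ} {s : Finset (Fin d → ℤ)} (h : s.Nonempty) : pick s ∈ s := by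
  unfold pick
  simp only [dif_pos h]
  exact h.choose_spec

section Yside

variable {d : ℕ} {Y : Type*} [TopologicalSpace Y]

/-- The set of marker directions at a point. -/
noncomputable def dirs (actY : Y → (Fin d → ℤ) → Y) (A : Set Y) (L : ℕ) (z : Y) :
    Finset (Fin d → ℤ) :=
  (ballF d L).filter fun n => actY z n ∈ A

lemma mem_dirs {actY : Y → (Fin d → ℤ) → Y} {A : Set Y} {L : ℕ} {z : Y}
    {n : Fin d → ℤ} : n ∈ dirs actY A L z ↔ n ∈ ballF d L ∧ actY z n ∈ A :=
  Finset.mem_filter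

/-- The colour of a point. -/
noncomputable def colF (actY : Y → (Fin d → ℤ) → Y) (A : Set Y) (L B : ℕ) (z : Y) :
    Fin d → Fin 3 :=
  fun j => ⟨qcol L B (pick (dirs actY A L z)) j, qcol_lt L B _ j⟩

lemma colF_val {actY : Y → (Fin d → ℤ) → Y} {A : Set Y} {L B : ℕ} {z : Y} {j : Fin d} :
    ((colF actY A L B z j : ℕ)) = qcol L B (pick (dirs actY A L z)) j := rfl

lemma colF_congr {actY : Y → (Fin d → ℤ) → Y} {A : Set Y} {L B : ℕ} {z w : Y}
    (h : dirs actY A L z = dirs actY A L w) :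
    colF actY A L B z = colF actY A L B w := by
  funext j
  apply Fin.ext
  rw [colF_val, colF_val, h]

/-- The `L`-neighbourhood of a set along the (pre-)action. -/
def nbr (actY : Y → (Fin d → ℤ) → Y) (L : ℕ) (A : Set Y) : Set Y :=
  ⋃ m ∈ ballF d L, (fun z => actY z m) ⁻¹' A

lemma mem_nbr {actY : Y → (Fin d → ℤ) → Y} {L : ℕ} {A : Set Y} {z : Y} :
    z ∈ nbr actY L A ↔ ∃ m ∈ ballF d L, actY z m ∈ A := by
  simp [nbr]

lemma nbr_mono {actY : Y → (Fin d → ℤ) → Y} {L : ℕ} {A B : Set Y} (h : A ⊆ B) :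
    nbr actY L A ⊆ nbr actY L B := by
  intro z hz
  rw [mem_nbr] at hz ⊢
  obtain ⟨m, hm, hmem⟩ := hz
  exact ⟨m, hm, h hmem⟩

lemma nbr_clopen {actY : Y → (Fin d → ℤ) → Y} (hYc : ∀ n, Continuous fun y => actY y n)
    {L : ℕ} {A : Set Y} (hA : IsClopen A) : IsClopen (nbr actY L A) :=
  Set.Finite.isClopen_biUnion (ballF d L).finite_toSet fun m _ => hA.preimage (hYc m)

/-- Greedy construction of a marker set from a list of clopen pieces. -/
def greedy (actY : Y → (Fin d → ℤ) → Y) (L : ℕ) : List (Set Y) → Set Y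
  | [] => ∅
  | C :: rest => greedy actY L rest ∪ (C \ nbr actY L (greedy actY L rest))

lemma greedy_clopen (actY : Y → (Fin d → ℤ) → Y) (hYc : ∀ n, Continuous fun y => actY y n)
    (L : ℕ) : ∀ l : List (Set Y), (∀ C ∈ l, IsClopen C) → IsClopen (greedy actY L l)
  | [], _ => isClopen_empty
  | C :: r, h => by
      have hr := greedy_clopen actY hYc L r (fun C' hC' => h C' (List.mem_cons_of_mem _ hC'))
      exact hr.union ((h C List.mem_cons_self).diff (nbr_clopen hYc hr))

lemma greedy_sep (actY : Y → (Fin d → ℤ) → Y)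
    (hY0 : ∀ y, actY y 0 = y)
    (hYadd : ∀ y m n, actY (actY y m) n = actY y (m + n)) (L : ℕ) :
    ∀ l : List (Set Y),
      (∀ C ∈ l, ∀ z ∈ C, ∀ m ∈ ballF d L, m ≠ 0 → actY z m ∉ C) →
      ∀ z ∈ greedy actY L l, ∀ m ∈ ballF d L, m ≠ 0 → actY z m ∉ greedy actY L l
  | [], _ => by intro z hz; exact absurd hz (Set.notMem_empty z)
  | C :: r, h => by
      intro z hz m hm hm0 hz'
      have hC := h C List.mem_cons_self
      have hr := greedy_sep actY hY0 hYadd L r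
        (fun C' hC' => h C' (List.mem_cons_of_mem _ hC'))
      have hback : actY (actY z m) (-m) = z := by
        rw [hYadd, add_neg_cancel, hY0]
      rcases hz with hz | hz <;> rcases hz' with hz' | hz'
      · exact hr z hz m hm hm0 hz'
      · refine hz'.2 ?_
        rw [mem_nbr]
        exact ⟨-m, neg_mem_ballF hm, by rw [hback]; exact hz⟩
      · refine hz.2 ?_
        rw [mem_nbr]
        exact ⟨m, hm, hz'⟩
      · exact hC z hz.1 m hm hm0 hz'.1

lemma greedy_subset_cons (actY : Y → (Fin d → ℤ) → Y) (L : ℕ) (C : Set Y)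
    (l : List (Set Y)) : greedy actY L l ⊆ greedy actY L (C :: l) :=
  Set.subset_union_left

lemma greedy_cover (actY : Y → (Fin d → ℤ) → Y) (L : ℕ) :
    ∀ l : List (Set Y), ∀ C ∈ l, C ⊆ greedy actY L l ∪ nbr actY L (greedy actY L l)
  | [], C => by intro h; exact absurd h List.not_mem_nil
  | C0 :: r, C => by
      intro hC y hy
      rcases List.mem_cons.mp hC with rfl | hC
      · by_cases hn : y ∈ nbr actY L (greedy actY L r)
        · exact Or.inr (nbr_mono (greedy_subset_cons actY L C r) hn)
        · exact Or.inl (Or.inr ⟨hy, hn⟩)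
      · rcases greedy_cover actY L r C hC hy with h | h
        · exact Or.inl (Or.inl h)
        · exact Or.inr (nbr_mono (greedy_subset_cons actY L C0 r) h)

/-- The clopen marker lemma: a clopen set whose orbit-traces are `L`-separated `L`-nets. -/
lemma marker_exists [CompactSpace Y] (actY : Y → (Fin d → ℤ) → Y)
    (hY0 : ∀ y, actY y 0 = y)
    (hYadd : ∀ y m n, actY (actY y m) n = actY y (m + n))
    (hYc : ∀ n, Continuous fun y => actY y n)
    (hfree : ∀ y n, actY y n = y → n = 0)
    (hsep : ∀ y z : Y, y ≠ z → ∃ W : Set Y, IsClopen W ∧ y ∈ W ∧ z ∉ W)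
    (L : ℕ) :
    ∃ A : Set Y, IsClopen A ∧
      (∀ z ∈ A, ∀ m ∈ ballF d L, m ≠ 0 → actY z m ∉ A) ∧
      (∀ y, ∃ m ∈ ballF d L, actY y m ∈ A) := by
  have key : ∀ y : Y, ∃ V : Set Y, IsClopen V ∧ y ∈ V ∧
      ∀ z ∈ V, ∀ m ∈ ballF d L, m ≠ 0 → actY z m ∉ V := by
    intro y
    have keym : ∀ m : Fin d → ℤ, ∃ Vm : Set Y, IsClopen Vm ∧ y ∈ Vm ∧
        (m ≠ 0 → ∀ z ∈ Vm, actY z m ∉ Vm) := by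
      intro m
      by_cases hm0 : m = 0
      · exact ⟨Set.univ, isClopen_univ, Set.mem_univ y, fun h => absurd hm0 h⟩
      · have hne : y ≠ actY y m := by
          intro h
          exact hm0 (hfree y m h.symm)
        obtain ⟨W, hWcl, hyW, hWm⟩ := hsep y (actY y m) hne
        refine ⟨W ∩ {z | actY z m ∉ W}, ?_, ⟨hyW, hWm⟩, ?_⟩
        · exact hWcl.inter (hWcl.compl.preimage (hYc m))
        · intro _ z hz hz'
          exact hz.2 hz'.1
    choose Vm hVmcl hVmmem hVmsep using keym
    refine ⟨⋂ m ∈ ballF d L, Vm m, ?_, ?_, ?_⟩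
    · exact Set.Finite.isClopen_biInter (ballF d L).finite_toSet fun m _ => hVmcl m
    · exact Set.mem_biInter fun m _ => hVmmem m
    · intro z hz m hm hm0 hz'
      have h1 : z ∈ Vm m := Set.mem_iInter₂.mp hz m hm
      have h2 : actY z m ∈ Vm m := Set.mem_iInter₂.mp hz' m hm
      exact hVmsep m hm0 z h1 h2
  choose V hVcl hVmem hVsep using key
  obtain ⟨t, ht⟩ := IsCompact.elim_finite_subcover isCompact_univ V
    (fun y => (hVcl y).isOpen) (fun y _ => Set.mem_iUnion.mpr ⟨y, hVmem y⟩)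
  set l : List (Set Y) := t.toList.map V with hl
  have hlmem : ∀ C ∈ l, IsClopen C ∧
      ∀ z ∈ C, ∀ m ∈ ballF d L, m ≠ 0 → actY z m ∉ C := by
    intro C hC
    rw [hl, List.mem_map] at hC
    obtain ⟨y, _, rfl⟩ := hC
    exact ⟨hVcl y, hVsep y⟩
  refine ⟨greedy actY L l, greedy_clopen actY hYc L l (fun C hC => (hlmem C hC).1),
    greedy_sep actY hY0 hYadd L l (fun C hC => (hlmem C hC).2), ?_⟩
  intro y
  have hy : y ∈ ⋃ i ∈ t, V i := ht (Set.mem_univ y)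
  rw [Set.mem_iUnion₂] at hy
  obtain ⟨i, hi, hyi⟩ := hy
  have hVil : V i ∈ l := by
    rw [hl, List.mem_map]
    exact ⟨i, Finset.mem_toList.mpr hi, rfl⟩
  rcases greedy_cover actY L l (V i) hVil hyi with h | h
  · exact ⟨0, zero_mem_ballF d L, by rw [hY0]; exact h⟩
  · rw [mem_nbr] at h
    exact h

end Yside

/-- The key lemma: a free action on a compact space with enough clopen sets has
dynamical asymptotic dimension at most `3^d - 1`. -/
lemma dadle_free {d : ℕ} {Y : Type*} [TopologicalSpace Y] [CompactSpace Y]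
    (actY : Y → (Fin d → ℤ) → Y)
    (hY0 : ∀ y, actY y 0 = y)
    (hYadd : ∀ y m n, actY (actY y m) n = actY y (m + n))
    (hYc : ∀ n, Continuous fun y => actY y n)
    (hfree : ∀ y n, actY y n = y → n = 0)
    (hsep : ∀ y z : Y, y ≠ z → ∃ W : Set Y, IsClopen W ∧ y ∈ W ∧ z ∉ W) :
    DADle actY (3 ^ d - 1) := by
  intro F
  obtain ⟨R, hFR⟩ : ∃ R : ℕ, ∀ v ∈ F, ∀ i, (v i).natAbs ≤ R := by
    refine ⟨F.sup (fun n => Finset.univ.sup fun i => (n i).natAbs), ?_⟩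
    intro v hv i
    calc (v i).natAbs ≤ Finset.univ.sup fun i => (v i).natAbs :=
          Finset.le_sup (f := fun i => (v i).natAbs) (Finset.mem_univ i)
      _ ≤ F.sup (fun n => Finset.univ.sup fun i => (n i).natAbs) :=
          Finset.le_sup (f := fun n => Finset.univ.sup fun i => (n i).natAbs) hv
  obtain ⟨L, hL⟩ : ∃ L : ℕ, L = 3 * R + 1 := ⟨_, rfl⟩
  obtain ⟨B, hB⟩ : ∃ B : ℕ, B = 2 * R + 1 := ⟨_, rfl⟩
  obtain ⟨A, hAcl, hAsep, hAnet⟩ :=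
    marker_exists actY hY0 hYadd hYc hfree hsep L
  have hSne : ∀ z, (dirs actY A L z).Nonempty := by
    intro z
    obtain ⟨m, hm, hmA⟩ := hAnet z
    exact ⟨m, mem_dirs.mpr ⟨hm, hmA⟩⟩
  have hμball : ∀ z, pick (dirs actY A L z) ∈ ballF d L :=
    fun z => (mem_dirs.mp (pick_mem (hSne z))).1
  have hμA : ∀ z, actY z (pick (dirs actY A L z)) ∈ A :=
    fun z => (mem_dirs.mp (pick_mem (hSne z))).2
  have hcard : Fintype.card (Fin d → Fin 3) = 3 ^ d - 1 + 1 := by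
    have h1 : (1 : ℕ) ≤ 3 ^ d := Nat.one_le_pow _ _ (by norm_num)
    simp only [Fintype.card_fun, Fintype.card_fin]
    omega
  obtain ⟨ε⟩ : Nonempty ((Fin d → Fin 3) ≃ Fin (3 ^ d - 1 + 1)) :=
    ⟨Fintype.equivFinOfCardEq hcard⟩
  refine ⟨fun i => {z | ε (colF actY A L B z) = i}, ?_, ?_, ?_⟩
  · -- openness
    intro i
    rw [isOpen_iff_forall_mem_open]
    intro y hy
    refine ⟨⋂ n ∈ ballF d L, {w | actY w n ∈ A ↔ actY y n ∈ A}, ?_, ?_, ?_⟩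
    · intro w hw
      have hSw : dirs actY A L w = dirs actY A L y := by
        ext n
        rw [mem_dirs, mem_dirs]
        constructor
        · rintro ⟨hn, hnA⟩
          exact ⟨hn, (Set.mem_iInter₂.mp hw n hn).mp hnA⟩
        · rintro ⟨hn, hnA⟩
          exact ⟨hn, (Set.mem_iInter₂.mp hw n hn).mpr hnA⟩
      show ε (colF actY A L B w) = i
      rw [colF_congr hSw]
      exact hy
    · refine Set.Finite.isOpen_biInter (ballF d L).finite_toSet ?_
      intro n _
      by_cases hn : actY y n ∈ A
      · have heq : {w : Y | actY w n ∈ A ↔ actY y n ∈ A} = (fun w => actY w n) ⁻¹' A := by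
          ext w; simp [hn]
        rw [heq]
        exact hAcl.isOpen.preimage (hYc n)
      · have heq : {w : Y | actY w n ∈ A ↔ actY y n ∈ A} = (fun w => actY w n) ⁻¹' Aᶜ := by
          ext w; simp [hn]
        rw [heq]
        exact hAcl.compl.isOpen.preimage (hYc n)
    · exact Set.mem_biInter fun n _ => Iff.rfl
  · -- covering
    rw [Set.eq_univ_iff_forall]
    intro z
    exact Set.mem_iUnion.mpr ⟨ε (colF actY A L B z), rfl⟩
  · -- the uniform bound
    refine ⟨(ballF d L).card, ?_⟩
    intro i y hy
    have freeInj : ∀ (z : Y) (a b : Fin d → ℤ), actY z a = actY z b → a = b := by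
      intro z a b h
      have h2 : actY (actY z a) (-a) = actY (actY z b) (-a) := by rw [h]
      rw [hYadd, hYadd, add_neg_cancel, hY0] at h2
      have := hfree z (b + -a) h2.symm
      exact (add_neg_eq_zero.mp this).symm
    -- Claim A : same colour + small step ⇒ same marker point
    have keyA : ∀ (z : Y) (v : Fin d → ℤ), (∀ j, (v j).natAbs ≤ R) →
        colF actY A L B z = colF actY A L B (actY z v) →
        actY z (pick (dirs actY A L z)) =
          actY (actY z v) (pick (dirs actY A L (actY z v))) := by
      intro z v hv hcoleq
      obtain ⟨a, ha⟩ : ∃ a, a = pick (dirs actY A L z) := ⟨_, rfl⟩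
      obtain ⟨b, hb⟩ : ∃ b, b = pick (dirs actY A L (actY z v)) := ⟨_, rfl⟩
      have hqeq : ∀ j, qcol L B a j = qcol L B b j := by
        intro j
        have h1 : colF actY A L B z j = colF actY A L B (actY z v) j :=
          congrFun hcoleq j
        have h2 : ((colF actY A L B z j : ℕ)) = ((colF actY A L B (actY z v) j : ℕ)) := by
          rw [h1]
        rw [colF_val, colF_val] at h2
        rw [ha, hb]
        exact h2
      have haball : a ∈ ballF d L := ha ▸ hμball z
      have hbball : b ∈ ballF d L := hb ▸ hμball (actY z v)
      have haA : actY z a ∈ A := ha ▸ hμA z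
      have hbA : actY (actY z v) b ∈ A := hb ▸ hμA (actY z v)
      have hab : ∀ j, (a j - b j).natAbs ≤ 2 * R :=
        qcol_close hL hB (fun j => mem_ballF.mp haball j)
          (fun j => mem_ballF.mp hbball j) hqeq
      have hzb : actY (actY z v) b = actY z (v + b) := by rw [hYadd]
      have hwact : actY (actY z a) (v + b - a) = actY (actY z v) b := by
        rw [hYadd, hzb]
        congr 1
        ring
      rw [← ha, ← hb]
      by_cases hw0 : v + b - a = 0
      · have hvba : v + b = a := by rwa [sub_eq_zero] at hw0
        rw [hzb, hvba]
      · exfalso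
        have hwball : v + b - a ∈ ballF d L := by
          rw [mem_ballF]
          intro j
          have h1 := hv j
          have h2 := hab j
          have h3 : (v + b - a) j = v j + b j - a j := rfl
          rw [h3]
          omega
        exact hAsep (actY z a) haA (v + b - a) hwball hw0 (hwact ▸ hbA)
    -- path induction
    have keyB : ∀ l : List (Fin d → ℤ), (∀ γ ∈ l, γ ∈ F) →
        (∀ k, 1 ≤ k → k ≤ l.length →
          actY y (l.take k).sum ∈ {z | ε (colF actY A L B z) = i}) →
        ∀ k, k ≤ l.length →
          actY (actY y (l.take k).sum) (pick (dirs actY A L (actY y (l.take k).sum))) =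
            actY y (pick (dirs actY A L y)) := by
      intro l hlF hpart k
      induction k with
      | zero =>
        intro _
        simp only [List.take_zero, List.sum_nil, hY0]
      | succ k ih =>
        intro hk1
        have hk : k ≤ l.length := Nat.le_of_succ_le hk1
        have hklt : k < l.length := hk1
        have ihk := ih hk
        have hvF : l[k]'hklt ∈ F := hlF _ (List.getElem_mem hklt)
        have hsum : (l.take (k + 1)).sum = (l.take k).sum + l[k]'hklt :=
          List.sum_take_succ l k hklt
        have hstep : actY y (l.take (k + 1)).sum =
            actY (actY y (l.take k).sum) (l[k]'hklt) := by
          rw [hYadd, hsum]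
        have hykcol : ε (colF actY A L B (actY y (l.take k).sum)) = i := by
          rcases Nat.eq_zero_or_pos k with rfl | hkpos
          · have h0 : actY y (l.take 0).sum = y := by
              simp only [List.take_zero, List.sum_nil, hY0]
            rw [h0]
            exact hy
          · exact hpart k hkpos hk
        have hyk1col : ε (colF actY A L B (actY y (l.take (k + 1)).sum)) = i :=
          hpart (k + 1) (Nat.succ_le_succ (Nat.zero_le k)) hk1
        have hcoleq : colF actY A L B (actY y (l.take k).sum) =
            colF actY A L B (actY (actY y (l.take k).sum) (l[k]'hklt)) := by
          apply ε.injective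
          rw [hykcol, ← hstep, hyk1col]
        have hA := keyA (actY y (l.take k).sum) (l[k]'hklt)
          (fun j => hFR _ hvF j) hcoleq
        rw [← hstep] at hA
        rw [← hA]
        exact ihk
    -- conclude
    have hsub : reachSet actY F {z | ε (colF actY A L B z) = i} y ⊆
        (fun b => actY y (pick (dirs actY A L y) - b)) '' ↑(ballF d L) := by
      intro z hz
      obtain ⟨l, hlne, hlF, hzeq, hpartial⟩ := hz
      have hfin := keyB l hlF hpartial l.length le_rfl
      rw [List.take_length] at hfin
      rw [← hzeq] at hfin
      have hzz : actY z (pick (dirs actY A L z)) =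
          actY y (l.sum + pick (dirs actY A L z)) := by
        rw [hzeq, hYadd]
      rw [hzz] at hfin
      have hsum : l.sum + pick (dirs actY A L z) = pick (dirs actY A L y) :=
        freeInj y _ _ hfin
      refine ⟨pick (dirs actY A L z), hμball z, ?_⟩
      show actY y (pick (dirs actY A L y) - pick (dirs actY A L z)) = z
      rw [← hsum, add_sub_cancel_right]
      exact hzeq.symm
    have hfinimg : ((fun b => actY y (pick (dirs actY A L y) - b)) ''
        ↑(ballF d L)).Finite :=
      Set.Finite.image _ (ballF d L).finite_toSet
    constructor
    · exact hfinimg.subset hsub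
    · calc (reachSet actY F {z | ε (colF actY A L B z) = i} y).ncard
          ≤ ((fun b => actY y (pick (dirs actY A L y) - b)) '' ↑(ballF d L)).ncard :=
            Set.ncard_le_ncard hsub hfinimg
        _ ≤ (↑(ballF d L) : Set (Fin d → ℤ)).ncard :=
            Set.ncard_image_le (ballF d L).finite_toSet
        _ = (ballF d L).card := Set.ncard_coe_finset _

/-- Pullback of the DAD bound along an extension, using freeness downstairs. -/
lemma dadle_pullback {d : ℕ} {X Y : Type*} [TopologicalSpace X] [TopologicalSpace Y]
    (actX : X → (Fin d → ℤ) → X) (actY : Y → (Fin d → ℤ) → Y)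
    (hY0 : ∀ y, actY y 0 = y)
    (hYadd : ∀ y m n, actY (actY y m) n = actY y (m + n))
    (hfree : ∀ y n, actY y n = y → n = 0)
    (π : X → Y) (hπc : Continuous π)
    (hπ : ∀ x n, π (actX x n) = actY (π x) n)
    (m : ℕ) (h : DADle actY m) : DADle actX m := by
  intro F
  obtain ⟨V, hVopen, hVcover, M, hM⟩ := h F
  have freeInj : ∀ (z : Y) (a b : Fin d → ℤ), actY z a = actY z b → a = b := by
    intro z a b hzz
    have h2 : actY (actY z a) (-a) = actY (actY z b) (-a) := by rw [hzz]
    rw [hYadd, hYadd, add_neg_cancel, hY0] at h2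
    have := hfree z (b + -a) h2.symm
    exact (add_neg_eq_zero.mp this).symm
  refine ⟨fun i => π ⁻¹' (V i), fun i => (hVopen i).preimage hπc, ?_, M, ?_⟩
  · rw [← Set.preimage_iUnion, hVcover, Set.preimage_univ]
  · intro i x hx
    have hxV : π x ∈ V i := hx
    obtain ⟨hfinY, hcardY⟩ := hM i (π x) hxV
    have himg : π '' reachSet actX F (π ⁻¹' (V i)) x ⊆ reachSet actY F (V i) (π x) := by
      rintro _ ⟨z, ⟨l, hlne, hlF, hzeq, hpartial⟩, rfl⟩
      refine ⟨l, hlne, hlF, by rw [hzeq, hπ], ?_⟩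
      intro k hk1 hk2
      have := hpartial k hk1 hk2
      rw [← hπ]
      exact this
    have hinj : Set.InjOn π (reachSet actX F (π ⁻¹' (V i)) x) := by
      rintro z1 ⟨l1, _, _, hz1, _⟩ z2 ⟨l2, _, _, hz2, _⟩ hpi
      rw [hz1, hz2, hπ, hπ] at hpi
      have := freeInj (π x) _ _ hpi
      rw [hz1, hz2, this]
    have hfinX : (reachSet actX F (π ⁻¹' (V i)) x).Finite :=
      Set.Finite.of_finite_image (hfinY.subset himg) hinj
    refine ⟨hfinX, ?_⟩
    calc (reachSet actX F (π ⁻¹' (V i)) x).ncard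
        = (π '' reachSet actX F (π ⁻¹' (V i)) x).ncard :=
          (Set.ncard_image_of_injOn hinj).symm
      _ ≤ (reachSet actY F (V i) (π x)).ncard := Set.ncard_le_ncard himg hfinY
      _ ≤ M := hcardY

end Stmt15

/-- any extension `X ⟵ ℤ^d` of a free continuous `ℤ^d`-action on the
Cantor set `Y` has dynamical asymptotic dimension at most `3^d − 1`. -/
theorem stmt_15 (d : ℕ) (X Y : Type*) [TopologicalSpace X] [TopologicalSpace Y]
    (hCantor : Nonempty (Y ≃ₜ (ℕ → Bool)))
    (actX : X → (Fin d → ℤ) → X) (actY : Y → (Fin d → ℤ) → Y)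
    (hX0 : ∀ x, actX x 0 = x)
    (hXadd : ∀ x m n, actX (actX x m) n = actX x (m + n))
    (hXc : ∀ n, Continuous fun x => actX x n)
    (hY0 : ∀ y, actY y 0 = y)
    (hYadd : ∀ y m n, actY (actY y m) n = actY y (m + n))
    (hYc : ∀ n, Continuous fun y => actY y n)
    (hfree : ∀ y n, actY y n = y → n = 0)
    (π : X → Y) (hπc : Continuous π) (hπs : Function.Surjective π)
    (hπ : ∀ x n, π (actX x n) = actY (π x) n) :
    DAD actX ≤ ((3 ^ d - 1 : ℕ) : ℕ∞) := by
  obtain ⟨e⟩ := hCantor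
  haveI : CompactSpace Y := e.symm.compactSpace
  have hsep : ∀ y z : Y, y ≠ z → ∃ W : Set Y, IsClopen W ∧ y ∈ W ∧ z ∉ W := by
    intro y z hyz
    have hez : e y ≠ e z := fun h => hyz (e.injective h)
    have hk : ∃ k, e y k ≠ e z k := by
      by_contra hcon
      push_neg at hcon
      exact hez (funext hcon)
    obtain ⟨k, hk⟩ := hk
    refine ⟨e ⁻¹' ((fun w : ℕ → Bool => w k) ⁻¹' {e y k}), ?_, ?_, ?_⟩
    · exact (IsClopen.preimage (isClopen_discrete _) (continuous_apply k)).preimage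
        e.continuous
    · simp
    · simp only [Set.mem_preimage, Set.mem_singleton_iff]
      exact fun h => hk h.symm
  have hY : DADle actY (3 ^ d - 1) :=
    Stmt15.dadle_free actY hY0 hYadd hYc hfree hsep
  have hX : DADle actX (3 ^ d - 1) :=
    Stmt15.dadle_pullback actX actY hY0 hYadd hfree π hπc hπ _ hY
  exact sInf_le ⟨3 ^ d - 1, rfl, hX⟩
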